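/- For every ε ∈ (0,1), every N ≥ 2 and every integer K with N/2 < K < N: max(θ_{N,K}(ε), τ^ℰ_{N,K}(ε)) ≤ τ_{N,K}(ε) ≤ θ_{N,K}(ε/2) + τ^ℰ_{N,K}(ε/2). -/

import Mathlib

open scoped Classical BigOperators

noncomputable section

/-- A particle configuration on the discrete circle `ℤ/Mℤ`. -/
abbrev Conf (M : ℕ) := ZMod M → Bool

/-- Number of occupied sites (particles) of a configuration. -/
def numParticles {M : ℕ} [NeZero M] (η : Conf M) : ℕ :=
  (Finset.univ.filter fun x => η x = true).card

/-- Ergodicity: every pair of neighbouring sites carries at least one particle. -/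
def isErgodic {M : ℕ} (η : Conf M) : Prop :=
  ∀ x : ZMod M, η x = true ∨ η (x + 1) = true

/-- The configuration `η` with the values at `x` and `y` exchanged. -/
def swapConf {α : Type*} [DecidableEq α] (η : α → Bool) (x y : α) : α → Bool :=
  fun z => if z = x then η y else if z = y then η x else η z

/-- Number of pairs `(x, z)`, `z ∈ {−1, +1}`, with `η_{x−z} = η_x = 1`, `η_{x+z} = 0` and
`η^{x,x+z} = η'`. -/
def jumpCount {N : ℕ} [NeZero N] (η η' : Conf N) : ℕ :=
  (Finset.univ.filter fun p : ZMod N × Bool =>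
    letI x := p.1
    letI z : ZMod N := if p.2 then 1 else -1
    η (x - z) = true ∧ η x = true ∧ η (x + z) = false ∧ swapConf η x (x + z) = η').card

/-- The configurations with exactly `K` particles, as a type. -/
abbrev GammaT (N K : ℕ) [NeZero N] := {η : Conf N // numParticles η = K}

/-- The FEP generator, as a matrix indexed by `Γ_{N,K}`. -/
def genFEP (N K : ℕ) [NeZero N] : Matrix (GammaT N K) (GammaT N K) ℝ :=
  fun η η' =>
    if η' = η then -(∑ η'' ∈ Finset.univ.filter (fun η'' => η'' ≠ η), (jumpCount η.1 η''.1 : ℝ))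
    else (jumpCount η.1 η'.1 : ℝ)

/-- The distribution at time `t` of the FEP started from `η`:  the row `η` of `exp (t Q)`. -/
def Pt (N K : ℕ) [NeZero N] (t : ℝ) (η : GammaT N K) : GammaT N K → ℝ :=
  fun η' => NormedSpace.exp (t • genFEP N K) η η'

/-- Total variation distance between two (probability) vectors on a finite set. -/
def dTV {S : Type*} [Fintype S] (p q : S → ℝ) : ℝ :=
  (∑ s, |p s - q s|) / 2

/-- The ergodic configurations with `K` particles, as a finset. -/
def ergoFinset (N K : ℕ) [NeZero N] : Finset (GammaT N K) :=
  Finset.univ.filter fun η => isErgodic η.1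

/-- The uniform probability measure on `ℰ_{N,K}`, extended by `0`. -/
def piFEP (N K : ℕ) [NeZero N] : GammaT N K → ℝ :=
  fun η => if isErgodic η.1 then (1 : ℝ) / (ergoFinset N K).card else 0

/-- The `ε`-mixing time of the FEP on `ℤ/Nℤ` with `K` particles. -/
def mixingTime (N K : ℕ) (ε : ℝ) : ℝ :=
  if h : N = 0 then 0 else
    haveI : NeZero N := ⟨h⟩
    sInf {t : ℝ | 0 ≤ t ∧ ∀ η : GammaT N K, dTV (Pt N K t η) (piFEP N K) ≤ ε}

/-- The `ε`-mixing time restricted to initial configurations in the ergodic component. -/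
def ergoMixingTime (N K : ℕ) (ε : ℝ) : ℝ :=
  if h : N = 0 then 0 else
    haveI : NeZero N := ⟨h⟩
    sInf {t : ℝ | 0 ≤ t ∧ ∀ η : GammaT N K, isErgodic η.1 → dTV (Pt N K t η) (piFEP N K) ≤ ε}

/-- The `ε`-transience time: the time needed for the mass of the transient set to drop
below `ε`, uniformly over the initial configuration. -/
def transienceTime (N K : ℕ) (ε : ℝ) : ℝ :=
  if h : N = 0 then 0 else
    haveI : NeZero N := ⟨h⟩
    sInf {t : ℝ | 0 ≤ t ∧ ∀ η : GammaT N K,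
      ∑ η' ∈ Finset.univ.filter (fun η' : GammaT N K => ¬ isErgodic η'.1), Pt N K t η η' ≤ ε}

end

noncomputable section FEPProof

open Finset

namespace FEP

variable {N : ℕ} [NeZero N]

/-- `z` is an admissible jump direction. -/
def IsDir (z : ZMod N) : Prop := z = 1 ∨ z = -1

/-- `(x, z)` is a legal FEP move in `η`. -/
def IsMove (η : Conf N) (x z : ZMod N) : Prop :=
  η (x - z) = true ∧ η x = true ∧ η (x + z) = false

/-- One step of the FEP. -/
def MoveRel (η η' : Conf N) : Prop := jumpCount η η' ≠ 0

lemma swapConf_swapConf {α : Type*} [DecidableEq α] (η : α → Bool) (x y : α) :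
    swapConf (swapConf η x y) y x = η := by
  funext w
  simp only [swapConf]
  split_ifs <;> simp_all

lemma swapConf_eq_comp {α : Type*} [DecidableEq α] (η : α → Bool) (x y : α) :
    swapConf η x y = η ∘ (Equiv.swap x y) := by
  funext z
  simp [swapConf, Equiv.swap_apply_def]
  split_ifs <;> rfl

lemma numParticles_swapConf (η : Conf N) (x y : ZMod N) :
    numParticles (swapConf η x y) = numParticles η := by
  rw [swapConf_eq_comp]
  unfold numParticles
  apply Finset.card_bij (fun a _ => Equiv.swap x y a)
  · intro a ha
    simp only [Finset.mem_filter, Finset.mem_univ, true_and, Function.comp] at ha ⊢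
    exact ha
  · intro a _ b _ h
    exact (Equiv.swap x y).injective h
  · intro b hb
    refine ⟨Equiv.swap x y b, ?_, by simp⟩
    simp only [Finset.mem_filter, Finset.mem_univ, true_and, Function.comp] at hb ⊢
    simpa using hb

lemma jumpCount_ne_zero_of_move (η : Conf N) (x : ZMod N) (b : Bool)
    (h : IsMove η x (if b then 1 else -1)) :
    jumpCount η (swapConf η x (x + (if b then 1 else -1))) ≠ 0 := by
  unfold jumpCount
  apply Finset.card_ne_zero_of_mem (a := (x, b))
  simp only [Finset.mem_filter, Finset.mem_univ, true_and]
  exact ⟨h.1, h.2.1, h.2.2, trivial⟩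

lemma exists_move_of_jumpCount {η η' : Conf N} (h : jumpCount η η' ≠ 0) :
    ∃ (x : ZMod N) (b : Bool), IsMove η x (if b then 1 else -1) ∧
      η' = swapConf η x (x + (if b then 1 else -1)) := by
  unfold jumpCount at h
  rw [Finset.card_ne_zero] at h
  obtain ⟨⟨x, b⟩, hp⟩ := h
  simp only [Finset.mem_filter, Finset.mem_univ, true_and] at hp
  exact ⟨x, b, ⟨hp.1, hp.2.1, hp.2.2.1⟩, hp.2.2.2.symm⟩

lemma isDir_of_bool (b : Bool) : IsDir (N := N) (if b then 1 else -1) := by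
  cases b <;> simp [IsDir]

lemma numParticles_of_moveRel {η η' : Conf N} (h : MoveRel η η') :
    numParticles η' = numParticles η := by
  obtain ⟨x, b, _, rfl⟩ := exists_move_of_jumpCount h
  exact numParticles_swapConf _ _ _

end FEP
namespace FEP

variable {N : ℕ} [NeZero N]

lemma natCast_ne_zero_zmod {j : ℕ} (h1 : j ≠ 0) (h2 : j < N) : ((j : ℕ) : ZMod N) ≠ 0 := by
  intro h
  have := congrArg ZMod.val h
  rw [ZMod.val_cast_of_lt h2, ZMod.val_zero] at this
  exact h1 this

lemma one_ne_zero_zmod (hN : 3 ≤ N) : (1 : ZMod N) ≠ 0 := by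
  have := natCast_ne_zero_zmod (N := N) (j := 1) one_ne_zero (by omega)
  simpa using this

lemma two_ne_zero_zmod (hN : 3 ≤ N) : (2 : ZMod N) ≠ 0 := by
  have := natCast_ne_zero_zmod (N := N) (j := 2) two_ne_zero (by omega)
  simpa using this

lemma dir_ne_zero (hN : 3 ≤ N) {z : ZMod N} (hz : IsDir z) : z ≠ 0 := by
  rcases hz with rfl | rfl
  · exact one_ne_zero_zmod hN
  · exact neg_ne_zero.mpr (one_ne_zero_zmod hN)

lemma isErgodic_swapConf (hN : 3 ≤ N) {η : Conf N} (hE : isErgodic η) {x z : ZMod N}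
    (hz : IsDir z) (h : IsMove η x z) : isErgodic (swapConf η x (x + z)) := by
  have h1 : (1 : ZMod N) ≠ 0 := one_ne_zero_zmod hN
  have h2 : (2 : ZMod N) ≠ 0 := two_ne_zero_zmod hN
  have hzne : z ≠ 0 := dir_ne_zero hN hz
  have hxz : x + z ≠ x := fun hh => hzne (by linear_combination hh)
  intro y
  by_cases hy1 : y = x + z
  · left; subst hy1; simp only [swapConf, if_neg hxz, if_pos rfl]; exact h.2.1
  by_cases hy2 : y + 1 = x + z
  · right; rw [hy2]; simp only [swapConf, if_neg hxz, if_pos rfl]; exact h.2.1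
  by_cases hy3 : y = x
  · rcases hz with rfl | rfl
    · exact absurd (by rw [hy3]) hy2
    · right
      have e1 : y + 1 ≠ x := fun hh => h1 (by linear_combination hh - hy3)
      have e2 : y + 1 ≠ x + -1 := fun hh => h2 (by linear_combination hh - hy3)
      simp only [swapConf, if_neg e1, if_neg e2]
      have e3 : y + 1 = x - -1 := by rw [hy3]; ring
      rw [e3]; exact h.1
  by_cases hy4 : y + 1 = x
  · rcases hz with rfl | rfl
    · left
      have e1 : y ≠ x := fun hh => h1 (by linear_combination hy4 - hh)
      simp only [swapConf, if_neg e1, if_neg hy1]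
      have : y = x - 1 := by linear_combination hy4
      rw [this]; exact h.1
    · exact absurd (by linear_combination hy4 : y = x + -1) hy1
  · have e1 : swapConf η x (x + z) y = η y := by simp only [swapConf, if_neg hy3, if_neg hy1]
    have e2 : swapConf η x (x + z) (y + 1) = η (y + 1) := by
      simp only [swapConf, if_neg hy4, if_neg hy2]
    rw [e1, e2]; exact hE y

lemma isMove_rev (hN : 3 ≤ N) {η : Conf N} (hE : isErgodic η) {x z : ZMod N}
    (hz : IsDir z) (h : IsMove η x z) :
    IsMove (swapConf η x (x + z)) (x + z) (-z) ∧
      swapConf (swapConf η x (x + z)) (x + z) (x + z + -z) = η := by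
  have h1 : (1 : ZMod N) ≠ 0 := one_ne_zero_zmod hN
  have h2 : (2 : ZMod N) ≠ 0 := two_ne_zero_zmod hN
  have hzne : z ≠ 0 := dir_ne_zero hN hz
  have hxz : x + z ≠ x := fun hh => hzne (by linear_combination hh)
  have hzz : x + z + z ≠ x := by
    rcases hz with rfl | rfl
    · exact fun hh => h2 (by linear_combination hh)
    · exact fun hh => h2 (by linear_combination -hh)
  have hzz2 : x + z + z ≠ x + z := fun hh => hzne (by linear_combination hh)
  have hfar : η (x + z + z) = true := by
    rcases hz with rfl | rfl
    · rcases hE (x + 1) with hh | hh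
      · rw [h.2.2] at hh; exact absurd hh Bool.false_ne_true
      · exact hh
    · rcases hE (x + -1 + -1) with hh | hh
      · exact hh
      · have e : x + -1 + -1 + 1 = x + -1 := by ring
        rw [e] at hh
        rw [h.2.2] at hh; exact absurd hh Bool.false_ne_true
  constructor
  · refine ⟨?_, ?_, ?_⟩
    · have e : x + z - -z = x + z + z := by ring
      rw [e]
      simp only [swapConf, if_neg hzz, if_neg hzz2]
      exact hfar
    · simp only [swapConf, if_neg hxz, if_pos rfl]; exact h.2.1
    · have e : x + z + -z = x := by ring
      rw [e]
      simp only [swapConf, if_pos rfl]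
      exact h.2.2
  · have e : x + z + -z = x := by ring
    rw [e]
    exact swapConf_swapConf η x (x + z)

lemma move_mem_rev (hN : 3 ≤ N) {η η' : Conf N} (hE : isErgodic η) {x : ZMod N} {b : Bool}
    (hmv : IsMove η x (if b then 1 else -1))
    (hsw : swapConf η x (x + (if b then 1 else -1)) = η') :
    IsMove η' (x + (if b then 1 else -1)) (if !b then 1 else -1) ∧
      swapConf η' (x + (if b then 1 else -1))
        ((x + (if b then 1 else -1)) + (if !b then 1 else -1)) = η := by
  have hneg : (if !b then 1 else (-1 : ZMod N)) = -(if b then 1 else -1) := by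
    cases b <;> simp
  rw [hneg, ← hsw]
  exact isMove_rev hN hE (isDir_of_bool b) hmv

lemma jumpCount_comm (hN : 3 ≤ N) {η η' : Conf N} (hE : isErgodic η) (hE' : isErgodic η') :
    jumpCount η η' = jumpCount η' η := by
  unfold jumpCount
  apply Finset.card_bij (fun p _ => (p.1 + (if p.2 then 1 else -1), !p.2))
  · intro p hp
    simp only [Finset.mem_filter, Finset.mem_univ, true_and] at hp ⊢
    obtain ⟨c1, c2, c3, c4⟩ := hp
    have hr := move_mem_rev hN hE (x := p.1) (b := p.2) ⟨c1, c2, c3⟩ c4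
    exact ⟨hr.1.1, hr.1.2.1, hr.1.2.2, hr.2⟩
  · intro p hp q hq hpq
    have hb : p.2 = q.2 := Bool.not_inj (congrArg Prod.snd hpq)
    have hx : p.1 = q.1 := by
      have := congrArg Prod.fst hpq
      simp only [hb] at this
      exact add_right_cancel this
    exact Prod.ext hx hb
  · intro q hq
    simp only [Finset.mem_filter, Finset.mem_univ, true_and] at hq
    obtain ⟨c1, c2, c3, c4⟩ := hq
    have hr := move_mem_rev hN hE' (x := q.1) (b := q.2) ⟨c1, c2, c3⟩ c4
    refine ⟨(q.1 + (if q.2 then 1 else -1), !q.2), ?_, ?_⟩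
    · simp only [Finset.mem_filter, Finset.mem_univ, true_and]
      exact ⟨hr.1.1, hr.1.2.1, hr.1.2.2, hr.2⟩
    · have hneg : (if !q.2 then 1 else (-1 : ZMod N)) = -(if q.2 then 1 else -1) := by
        cases q.2 <;> simp
      rw [hneg]
      have : q.1 + (if q.2 then 1 else -1) + -(if q.2 then 1 else -1) = q.1 := by ring
      rw [this]
      simp

lemma moveRel_ne {η η' : Conf N} (h : MoveRel η η') : η' ≠ η := by
  obtain ⟨x, b, hmv, rfl⟩ := exists_move_of_jumpCount h
  intro hh
  have := congrArg (fun f => f x) hh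
  simp only [swapConf, if_pos rfl] at this
  rw [hmv.2.2] at this
  rw [hmv.2.1] at this
  exact Bool.false_ne_true this

lemma isErgodic_of_moveRel (hN : 3 ≤ N) {η η' : Conf N} (hE : isErgodic η) (h : MoveRel η η') :
    isErgodic η' := by
  obtain ⟨x, b, hmv, rfl⟩ := exists_move_of_jumpCount h
  exact isErgodic_swapConf hN hE (isDir_of_bool b) hmv

end FEP
namespace FEP

variable {N : ℕ} [NeZero N]

/-- The set of left endpoints of adjacent pairs of holes. -/
def holePairs (η : Conf N) : Finset (ZMod N) :=
  Finset.univ.filter fun y => η y = false ∧ η (y + 1) = false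

lemma swapConf_fst {α : Type*} [DecidableEq α] (η : α → Bool) (x y : α) :
    swapConf η x y x = η y := by simp [swapConf]

lemma swapConf_snd {α : Type*} [DecidableEq α] (η : α → Bool) {x y : α} (h : y ≠ x) :
    swapConf η x y y = η x := by simp [swapConf, h]

lemma swapConf_other {α : Type*} [DecidableEq α] (η : α → Bool) {x y w : α}
    (h1 : w ≠ x) (h2 : w ≠ y) : swapConf η x y w = η w := by simp [swapConf, h1, h2]

lemma isErgodic_iff_holePairs {η : Conf N} : isErgodic η ↔ holePairs η = ∅ := by
  unfold isErgodic holePairs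
  rw [Finset.filter_eq_empty_iff]
  constructor
  · intro h y _ hc
    rcases h y with hh | hh
    · rw [hc.1] at hh; exact Bool.false_ne_true hh
    · rw [hc.2] at hh; exact Bool.false_ne_true hh
  · intro h y
    have := h (Finset.mem_univ y)
    by_cases h1 : η y = true
    · exact Or.inl h1
    · by_cases h2 : η (y + 1) = true
      · exact Or.inr h2
      · exact absurd ⟨Bool.eq_false_iff.mpr h1, Bool.eq_false_iff.mpr h2⟩ this

lemma holePairs_swap_subset (hN : 3 ≤ N) {η : Conf N} {x z : ZMod N}
    (hz : IsDir z) (h : IsMove η x z) :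
    holePairs (swapConf η x (x + z)) ⊆ holePairs η := by
  have h1 : (1 : ZMod N) ≠ 0 := one_ne_zero_zmod hN
  have h2 : (2 : ZMod N) ≠ 0 := two_ne_zero_zmod hN
  have hzne : z ≠ 0 := dir_ne_zero hN hz
  have hxz : x + z ≠ x := fun hh => hzne (by linear_combination hh)
  intro y hy
  simp only [holePairs, Finset.mem_filter, Finset.mem_univ, true_and] at hy ⊢
  obtain ⟨hy0, hy1⟩ := hy
  -- y and y+1 cannot be x+z since the swap puts a particle there
  have hne1 : y ≠ x + z := by
    intro hh; rw [hh, swapConf_snd _ hxz, h.2.1] at hy0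
    exact absurd hy0 (by decide)
  have hne2 : y + 1 ≠ x + z := by
    intro hh; rw [hh, swapConf_snd _ hxz, h.2.1] at hy1
    exact absurd hy1 (by decide)
  -- y and y+1 cannot be x either (its new neighbours are occupied)
  have hne3 : y ≠ x := by
    intro hh
    rcases hz with rfl | rfl
    · exact hne2 (by rw [hh])
    · have e1 : y + 1 ≠ x := fun hc => h1 (by linear_combination hc - hh)
      have e2 : y + 1 ≠ x + -1 := fun hc => h2 (by linear_combination hc - hh)
      rw [swapConf_other _ e1 e2] at hy1
      have e3 : y + 1 = x - -1 := by rw [hh]; ring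
      rw [e3, h.1] at hy1
      exact Bool.false_ne_true hy1.symm
  have hne4 : y + 1 ≠ x := by
    intro hh
    rcases hz with rfl | rfl
    · have e1 : y ≠ x := fun hc => h1 (by linear_combination hh - hc)
      rw [swapConf_other _ e1 hne1] at hy0
      have e3 : y = x - 1 := by linear_combination hh
      rw [e3, h.1] at hy0
      exact Bool.false_ne_true hy0.symm
    · exact hne1 (by linear_combination hh)
  rw [swapConf_other _ hne3 hne1] at hy0
  rw [swapConf_other _ hne4 hne2] at hy1
  exact ⟨hy0, hy1⟩

lemma holePairs_swap_lt (hN : 3 ≤ N) {η : Conf N} {x z : ZMod N}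
    (hz : IsDir z) (h : IsMove η x z) (hfar : η (x + z + z) = false) :
    (holePairs (swapConf η x (x + z))).card < (holePairs η).card := by
  have h1 : (1 : ZMod N) ≠ 0 := one_ne_zero_zmod hN
  have hzne : z ≠ 0 := dir_ne_zero hN hz
  have hxz : x + z ≠ x := fun hh => hzne (by linear_combination hh)
  apply Finset.card_lt_card
  rw [Finset.ssubset_iff_of_subset (holePairs_swap_subset hN hz h)]
  rcases hz with rfl | rfl
  · refine ⟨x + 1, ?_, ?_⟩
    · simp only [holePairs, Finset.mem_filter, Finset.mem_univ, true_and]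
      exact ⟨h.2.2, hfar⟩
    · simp only [holePairs, Finset.mem_filter, Finset.mem_univ, true_and]
      intro hc
      have hc1 := hc.1
      rw [swapConf_snd _ hxz, h.2.1] at hc1
      exact absurd hc1 (by decide)
  · refine ⟨x + -1 + -1, ?_, ?_⟩
    · simp only [holePairs, Finset.mem_filter, Finset.mem_univ, true_and]
      constructor
      · exact hfar
      · have e : x + -1 + -1 + 1 = x + -1 := by ring
        rw [e]; exact h.2.2
    · simp only [holePairs, Finset.mem_filter, Finset.mem_univ, true_and]
      intro hc
      have hc2 := hc.2
      have e : x + -1 + -1 + 1 = x + -1 := by ring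
      rw [e, swapConf_snd _ hxz, h.2.1] at hc2
      exact absurd hc2 (by decide)

lemma holes_card {η : Conf N} :
    (Finset.univ.filter fun x : ZMod N => η x = false).card = N - numParticles η := by
  have hc : (Finset.univ.filter fun x : ZMod N => η x = false) =
      (Finset.univ.filter fun x : ZMod N => η x = true)ᶜ := by
    ext y
    simp only [Finset.mem_compl, Finset.mem_filter, Finset.mem_univ, true_and]
    exact ⟨fun h hc => by rw [h] at hc; exact Bool.false_ne_true hc,
      fun h => Bool.eq_false_iff.mpr h⟩
  rw [hc, Finset.card_compl]
  unfold numParticles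
  rw [Fintype.card_eq_nat_card, Nat.card_zmod]

lemma exists_adj_particles {η : Conf N} (hK : N < 2 * numParticles η) :
    ∃ x : ZMod N, η x = true ∧ η (x + 1) = true := by
  by_contra hc
  push_neg at hc
  have hinj : ∀ a ∈ (Finset.univ.filter fun x : ZMod N => η x = true), a + 1 ∈
      (Finset.univ.filter fun x : ZMod N => η x = false) := by
    intro a ha
    simp only [Finset.mem_filter, Finset.mem_univ, true_and] at ha ⊢
    exact Bool.eq_false_iff.mpr (hc a ha)
  have hle := Finset.card_le_card_of_injOn _ hinj (fun a _ b _ hab => by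
    exact add_right_cancel hab)
  rw [holes_card] at hle
  have hNc : numParticles η ≤ N := by
    unfold numParticles
    have := Finset.card_filter_le (Finset.univ : Finset (ZMod N)) (fun x => η x = true)
    rwa [Finset.card_univ, Fintype.card_eq_nat_card, Nat.card_zmod] at this
  have heq : (Finset.univ.filter fun x : ZMod N => η x = true).card = numParticles η := rfl
  omega

end FEP
namespace FEP

variable {N : ℕ} [NeZero N]

lemma sub_natCast_ne (a : ZMod N) {c d : ℕ} (hc : c < N) (hd : d < N) (h : c ≠ d) :
    a - (c : ZMod N) ≠ a - (d : ZMod N) := by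
  intro hh
  rw [sub_right_inj] at hh
  exact h (by rw [← ZMod.val_cast_of_lt hc, ← ZMod.val_cast_of_lt hd, hh])

lemma addone_eq_sub (a : ZMod N) : a + 1 = a - ((N - 1 : ℕ) : ZMod N) := by
  have hN : 1 ≤ N := Nat.one_le_iff_ne_zero.mpr (NeZero.ne N)
  have : ((N - 1 : ℕ) : ZMod N) = -1 := by
    rw [Nat.cast_sub hN, ZMod.natCast_self, Nat.cast_one]
    ring
  rw [this]; ring

lemma step_exists {η : Conf N} {x : ZMod N} (hmv : IsMove η x 1) :
    MoveRel η (swapConf η x (x + 1)) := by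
  have h := jumpCount_ne_zero_of_move η x true (by simpa using hmv)
  simpa [MoveRel] using h

lemma reduceD_aux (hN : 3 ≤ N) (t : ℕ) :
    ∀ η : Conf N, ∀ a : ZMod N,
      1 ≤ t → t + 2 ≤ N →
      η a = false → η (a + 1) = false →
      η (a - (t : ℕ)) = true → η (a - (t + 1 : ℕ)) = true →
      (∀ k : ℕ, 1 ≤ k → k < t → ¬(η (a - (k : ℕ)) = true ∧ η (a - (k + 1 : ℕ)) = true)) →
      ∃ η', Relation.ReflTransGen MoveRel η η' ∧
        (holePairs η').card < (holePairs η).card ∧ numParticles η' = numParticles η := by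
  induction t using Nat.strong_induction_on with
  | _ t IH =>
  intro η a ht1 htN ha ha1 hat hat1 hmin
  obtain _ | _ | q := t
  · omega
  · -- t = 1
    have hmv : IsMove η (a - 1) 1 := by
      refine ⟨?_, ?_, ?_⟩
      · have e : a - 1 - 1 = a - ((1 + 1 : ℕ) : ZMod N) := by push_cast; ring
        rw [e]; exact hat1
      · have e : a - 1 = a - ((1 : ℕ) : ZMod N) := by push_cast; ring
        rw [e]; exact hat
      · have e : a - 1 + 1 = a := by ring
        rw [e]; exact ha
    refine ⟨swapConf η (a-1) (a-1+1), Relation.ReflTransGen.single (step_exists hmv), ?_,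
      numParticles_swapConf _ _ _⟩
    apply holePairs_swap_lt hN (Or.inl rfl) hmv
    have e : a - 1 + 1 + 1 = a + 1 := by ring
    rw [e]; exact ha1
  · -- t = q + 2
    have hq2N : q + 2 < N := by omega
    have hq1N : q + 1 < N := by omega
    have hqN : q < N := by omega
    have hhole : η (a - ((q + 1 : ℕ) : ZMod N)) = false := by
      have hm := hmin (q+1) (by omega) (by omega)
      by_cases hc : η (a - ((q + 1 : ℕ) : ZMod N)) = true
      · exfalso
        apply hm
        refine ⟨hc, ?_⟩
        have e : a - ((q + 1 + 1 : ℕ) : ZMod N) = a - ((q + 2 : ℕ) : ZMod N) := by push_cast; ring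
        rw [e]
        exact (by exact_mod_cast hat)
      · exact Bool.eq_false_iff.mpr hc
    have hmv : IsMove η (a - ((q + 2 : ℕ) : ZMod N)) 1 := by
      refine ⟨?_, ?_, ?_⟩
      · have e : a - ((q + 2 : ℕ) : ZMod N) - 1 = a - ((q + 2 + 1 : ℕ) : ZMod N) := by
          push_cast; ring
        rw [e]; exact (by exact_mod_cast hat1)
      · exact (by exact_mod_cast hat)
      · have e : a - ((q + 2 : ℕ) : ZMod N) + 1 = a - ((q + 1 : ℕ) : ZMod N) := by
          push_cast; ring
        rw [e]; exact hhole
    have e1 : a - ((q + 2 : ℕ) : ZMod N) + 1 = a - ((q + 1 : ℕ) : ZMod N) := by push_cast; ring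
    set X := a - ((q + 2 : ℕ) : ZMod N) with hX
    set η' := swapConf η X (X + 1) with hη'
    have hstep : MoveRel η η' := step_exists hmv
    have hsubset : holePairs η' ⊆ holePairs η := holePairs_swap_subset hN (Or.inl rfl) hmv
    have hcount : numParticles η' = numParticles η := numParticles_swapConf _ _ _
    by_cases hq : η (a - (q : ℕ)) = false
    · refine ⟨η', Relation.ReflTransGen.single hstep, ?_, hcount⟩
      apply holePairs_swap_lt hN (Or.inl rfl) hmv
      have e : X + 1 + 1 = a - (q : ℕ) := by rw [hX]; push_cast; ring
      rw [e]; exact hq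
    · have hq' : η (a - (q : ℕ)) = true := Bool.of_not_eq_false hq
      rcases Nat.eq_zero_or_pos q with rfl | hqpos
      · exfalso
        rw [show ((0:ℕ) : ZMod N) = 0 from Nat.cast_zero, sub_zero, ha] at hq'
        exact absurd hq' (by decide)
      -- values of η'
      have hvX1 : η' (X + 1) = true := by
        rw [hη', swapConf_snd _ (by intro hh; exact one_ne_zero_zmod hN (by linear_combination hh))]
        exact (by exact_mod_cast hat)
      have hother : ∀ w : ZMod N, w ≠ X → w ≠ X + 1 → η' w = η w := by
        intro w h1 h2
        rw [hη', swapConf_other _ h1 h2]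
      have hXe : ∀ c : ℕ, c < N → c ≠ q + 2 → a - (c : ZMod N) ≠ X :=
        fun c hcN hc => sub_natCast_ne a hcN hq2N hc
      have hX1e : ∀ c : ℕ, c < N → c ≠ q + 1 → a - (c : ZMod N) ≠ X + 1 := by
        intro c hcN hc
        rw [e1]
        exact sub_natCast_ne a hcN hq1N hc
      have ea : η' a = false := by
        have e0 : a = a - ((0:ℕ) : ZMod N) := by push_cast; ring
        rw [e0, hother _ (hXe 0 (by omega) (by omega)) (hX1e 0 (by omega) (by omega)), ← e0]
        exact ha
      have ea1 : η' (a + 1) = false := by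
        have e0 : a + 1 = a - ((N - 1 : ℕ) : ZMod N) := addone_eq_sub a
        rw [e0, hother _ (hXe (N-1) (by omega) (by omega)) (hX1e (N-1) (by omega) (by omega)), ← e0]
        exact ha1
      have eq' : η' (a - (q : ℕ)) = true := by
        rw [hother _ (hXe q hqN (by omega)) (hX1e q hqN (by omega))]
        exact hq'
      have eq1' : η' (a - (q + 1 : ℕ)) = true := by
        have e : a - ((q + 1 : ℕ) : ZMod N) = X + 1 := e1.symm
        rw [e]; exact hvX1
      have hmin' : ∀ k : ℕ, 1 ≤ k → k < q →
          ¬(η' (a - (k : ℕ)) = true ∧ η' (a - (k + 1 : ℕ)) = true) := by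
        intro k hk1 hkq
        rw [hother _ (hXe k (by omega) (by omega)) (hX1e k (by omega) (by omega)),
          hother _ (hXe (k+1) (by omega) (by omega)) (hX1e (k+1) (by omega) (by omega))]
        exact hmin k hk1 (by omega)
      obtain ⟨η'', hr, hlt, hcnt⟩ := IH q (by omega) η' a hqpos (by omega) ea ea1 eq' eq1' hmin'
      refine ⟨η'', Relation.ReflTransGen.head hstep hr, ?_, ?_⟩
      · exact lt_of_lt_of_le hlt (Finset.card_le_card hsubset)
      · rw [hcnt, hcount]

end FEP
namespace FEP

variable {N : ℕ} [NeZero N]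

lemma reduceD (hN : 3 ≤ N) {η : Conf N} (hK : N < 2 * numParticles η) (hne : ¬ isErgodic η) :
    ∃ η', Relation.ReflTransGen MoveRel η η' ∧
      (holePairs η').card < (holePairs η).card ∧ numParticles η' = numParticles η := by
  -- find an adjacent pair of holes
  have : ¬ ∀ x : ZMod N, η x = true ∨ η (x + 1) = true := hne
  push_neg at this
  obtain ⟨a, ha, ha1⟩ := this
  replace ha : η a = false := Bool.eq_false_iff.mpr ha
  replace ha1 : η (a + 1) = false := Bool.eq_false_iff.mpr ha1
  -- find an adjacent pair of particles
  obtain ⟨x₀, hx₀, hx₀1⟩ := exists_adj_particles hK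
  -- the distance from a back to the pair
  set k : ℕ := (a - (x₀ + 1)).val with hk
  have hkcast : (k : ZMod N) = a - (x₀ + 1) := by
    rw [hk]; exact ZMod.natCast_rightInverse _
  have hak : a - (k : ℕ) = x₀ + 1 := by rw [hkcast]; ring
  have hak1 : a - ((k + 1 : ℕ) : ZMod N) = x₀ := by push_cast; rw [hkcast]; ring
  have hkN : k < N := ZMod.val_lt _
  have hk1 : 1 ≤ k := by
    rcases Nat.eq_zero_or_pos k with h0 | h
    swap
    · exact h
    · exfalso
      rw [h0] at hak
      simp only [Nat.cast_zero, sub_zero] at hak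
      rw [hak, hx₀1] at ha
      exact absurd ha (by decide)
  have hkN1 : k ≠ N - 1 := by
    intro hkeq
    rw [hkeq] at hak
    rw [← addone_eq_sub a] at hak
    have hax : a = x₀ := by linear_combination hak
    rw [hax, hx₀] at ha
    exact absurd ha (by decide)
  have hkN2 : k + 2 ≤ N := by omega
  -- take the minimal such distance
  have hex : ∃ u : ℕ, 1 ≤ u ∧ η (a - (u : ℕ)) = true ∧ η (a - (u + 1 : ℕ)) = true := by
    refine ⟨k, hk1, ?_, ?_⟩
    · rw [hak]; exact hx₀1
    · rw [hak1]; exact hx₀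
  set t := Nat.find hex with htdef
  have htspec := Nat.find_spec hex
  have htle : t ≤ k := Nat.find_le ⟨hk1, by rw [hak]; exact hx₀1, by rw [hak1]; exact hx₀⟩
  apply reduceD_aux hN t η a htspec.1 (by omega) ha ha1 htspec.2.1 htspec.2.2
  intro u hu1 hut hc
  exact Nat.find_min hex hut ⟨hu1, hc.1, hc.2⟩

/-- From any configuration with more than `N/2` particles, an ergodic configuration
can be reached. -/
lemma absorb (hN : 3 ≤ N) : ∀ n : ℕ, ∀ η : Conf N, (holePairs η).card ≤ n →
    N < 2 * numParticles η →
    ∃ ξ, Relation.ReflTransGen MoveRel η ξ ∧ isErgodic ξ ∧ numParticles ξ = numParticles η := by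
  intro n
  induction n with
  | zero =>
    intro η hcard _
    refine ⟨η, Relation.ReflTransGen.refl, ?_, rfl⟩
    rw [isErgodic_iff_holePairs]
    exact Finset.card_eq_zero.mp (Nat.le_zero.mp hcard)
  | succ n IHn =>
    intro η hcard hK
    by_cases hE : isErgodic η
    · exact ⟨η, Relation.ReflTransGen.refl, hE, rfl⟩
    · obtain ⟨η', hr, hlt, hcnt⟩ := reduceD hN hK hE
      obtain ⟨ξ, hr2, hE2, hcnt2⟩ := IHn η' (by omega) (by rw [hcnt]; exact hK)
      exact ⟨ξ, hr.trans hr2, hE2, by rw [hcnt2, hcnt]⟩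

end FEP
namespace FEP

variable {N : ℕ} [NeZero N]

/-- The holes of the canonical ergodic configuration: `0, 2, …, 2(N-K-1)`. -/
def starHoles (N K : ℕ) [NeZero N] : Finset (ZMod N) :=
  (Finset.range (N - K)).image (fun i => ((2 * i : ℕ) : ZMod N))

/-- The canonical ergodic configuration. -/
def starConf (N K : ℕ) [NeZero N] : Conf N := fun x => decide (x ∉ starHoles N K)

variable {K : ℕ}

lemma card_starHoles (hK1 : N < 2 * K) (hK2 : K ≤ N) : (starHoles N K).card = N - K := by
  rw [starHoles, Finset.card_image_of_injOn, Finset.card_range]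
  intro i hi j hj hij
  simp only at hij
  have hi' : 2 * i < N := by have := Finset.mem_range.mp hi; omega
  have hj' : 2 * j < N := by have := Finset.mem_range.mp hj; omega
  have h2 : 2 * i = 2 * j := by
    have := congrArg ZMod.val hij
    rwa [ZMod.val_cast_of_lt hi', ZMod.val_cast_of_lt hj'] at this
  omega

lemma numParticles_starConf (hK1 : N < 2 * K) (hK2 : K ≤ N) :
    numParticles (starConf N K) = K := by
  unfold numParticles
  have he : (Finset.univ.filter fun x : ZMod N => starConf N K x = true) = (starHoles N K)ᶜ := by
    ext y; simp [starConf]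
  rw [he, Finset.card_compl, card_starHoles hK1 hK2, Fintype.card_eq_nat_card, Nat.card_zmod]
  omega

lemma isErgodic_starConf (hK1 : N < 2 * K) (hK2 : K ≤ N) : isErgodic (starConf N K) := by
  intro x
  by_contra hc
  push_neg at hc
  obtain ⟨h1, h2⟩ := hc
  have m1 : x ∈ starHoles N K := by
    have := Bool.eq_false_iff.mpr h1
    simpa [starConf] using this
  have m2 : x + 1 ∈ starHoles N K := by
    have := Bool.eq_false_iff.mpr h2
    simpa [starConf] using this
  obtain ⟨i, hi, hix⟩ := Finset.mem_image.mp m1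
  obtain ⟨j, hj, hjx⟩ := Finset.mem_image.mp m2
  have hi' : 2 * i + 1 < N := by have := Finset.mem_range.mp hi; omega
  have hj' : 2 * j < N := by have := Finset.mem_range.mp hj; omega
  have hsum : ((2 * i : ℕ) : ZMod N) + 1 = ((2 * j : ℕ) : ZMod N) := by rw [hix, hjx]
  have hcast : ((2 * i + 1 : ℕ) : ZMod N) = ((2 * j : ℕ) : ZMod N) := by
    push_cast
    push_cast at hsum
    linear_combination hsum
  have : 2 * i + 1 = 2 * j := by
    have := congrArg ZMod.val hcast
    rwa [ZMod.val_cast_of_lt hi', ZMod.val_cast_of_lt hj'] at this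
  omega

lemma stuck_eq_star (hK1 : N < 2 * K) (hK2 : K ≤ N) {η : Conf N}
    (hcnt : numParticles η = K)
    (hst : ∀ h : ZMod N, η h = false → h ≠ 0 → η (h - 2) = false) : η = starConf N K := by
  set m := N - K with hm
  set S := Finset.univ.filter (fun x : ZMod N => η x = false) with hSdef
  have hScard : S.card = m := by rw [hSdef, holes_card, hcnt]
  have hstep : ∀ h ∈ S, h ≠ 0 → h - 2 ∈ S := by
    intro h hhS hne
    simp only [hSdef, Finset.mem_filter, Finset.mem_univ, true_and] at hhS ⊢
    exact hst h hhS hne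
  have hmain : ∀ h ∈ S, ∃ j, j < m ∧ h = ((2 * j : ℕ) : ZMod N) := by
    intro h hhS
    by_contra hno
    push_neg at hno
    have hchain : ∀ i : ℕ, i ≤ m → h - ((2 * i : ℕ) : ZMod N) ∈ S := by
      intro i
      induction i with
      | zero => intro _; simpa using hhS
      | succ i IHi =>
        intro hiM
        have hin := IHi (by omega)
        have hne : h - ((2 * i : ℕ) : ZMod N) ≠ 0 := by
          intro hzero
          exact hno i (by omega) (by linear_combination hzero)
        have hmem := hstep _ hin hne
        have e : h - ((2 * i : ℕ) : ZMod N) - 2 = h - ((2 * (i + 1) : ℕ) : ZMod N) := by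
          push_cast; ring
        rwa [e] at hmem
    have hmaps : ∀ i ∈ Finset.range (m + 1), h - ((2 * i : ℕ) : ZMod N) ∈ S :=
      fun i hi => hchain i (Nat.lt_succ_iff.mp (Finset.mem_range.mp hi))
    obtain ⟨i, hi, j, hj, hij, he⟩ := Finset.exists_ne_map_eq_of_card_lt_of_maps_to
      (by rw [hScard, Finset.card_range]; omega) hmaps
    rw [sub_right_inj] at he
    have hi' : 2 * i < N := by have := Finset.mem_range.mp hi; omega
    have hj' : 2 * j < N := by have := Finset.mem_range.mp hj; omega
    have h2 : 2 * i = 2 * j := by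
      have := congrArg ZMod.val he
      rwa [ZMod.val_cast_of_lt hi', ZMod.val_cast_of_lt hj'] at this
    exact hij (by omega)
  have hsub : S ⊆ starHoles N K := by
    intro h hhS
    obtain ⟨j, hj, rfl⟩ := hmain h hhS
    exact Finset.mem_image.mpr ⟨j, Finset.mem_range.mpr hj, rfl⟩
  have hEq : S = starHoles N K :=
    Finset.eq_of_subset_of_card_le hsub (by rw [card_starHoles hK1 hK2, hScard])
  funext x
  by_cases hx : η x = false
  · have hxS : x ∈ starHoles N K := by
      rw [← hEq]
      simp [hSdef, hx]
    rw [hx]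
    symm
    simp [starConf, hxS]
  · have hx' : η x = true := Bool.of_not_eq_false hx
    have hxS : x ∉ starHoles N K := by
      rw [← hEq]
      simp [hSdef, hx']
    rw [hx']
    symm
    simp [starConf, hxS]

/-- The potential used in the irreducibility argument. -/
def Phi (η : Conf N) : ℕ := ∑ x ∈ Finset.univ.filter (fun x : ZMod N => η x = false), x.val

lemma val_sub_one_lt {h : ZMod N} (hne : h ≠ 0) : (h - 1).val < h.val := by
  have hv : 1 ≤ h.val := Nat.one_le_iff_ne_zero.mpr
    (fun hh => hne ((ZMod.val_eq_zero _).mp hh))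
  have hcast : ((h.val : ℕ) : ZMod N) = h := ZMod.natCast_rightInverse _
  have he : h - 1 = ((h.val - 1 : ℕ) : ZMod N) := by
    rw [Nat.cast_sub hv, hcast, Nat.cast_one]
  have hlt : h.val - 1 < N := by have := ZMod.val_lt h; omega
  rw [he, ZMod.val_cast_of_lt hlt]
  omega

lemma reach_star (hN : 3 ≤ N) (hK1 : N < 2 * K) (hK2 : K ≤ N) :
    ∀ n : ℕ, ∀ η : Conf N, Phi η ≤ n → numParticles η = K → isErgodic η →
      Relation.ReflTransGen MoveRel η (starConf N K) := by
  intro n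
  induction n using Nat.strong_induction_on with
  | _ n IHn =>
  intro η hphi hcnt hE
  by_cases heq : η = starConf N K
  · rw [heq]
  · have hstuck : ¬ ∀ h : ZMod N, η h = false → h ≠ 0 → η (h - 2) = false := by
      intro hst
      exact heq (stuck_eq_star hK1 hK2 hcnt hst)
    push_neg at hstuck
    obtain ⟨h, hh, hne0, hh2⟩ := hstuck
    replace hh2 : η (h - 2) = true := Bool.of_not_eq_false hh2
    have hh1 : η (h - 1) = true := by
      rcases hE (h - 1) with hx | hx
      · exact hx
      · rw [(by ring : h - 1 + 1 = h), hh] at hx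
        exact absurd hx (by decide)
    have hmv : IsMove η (h - 1) 1 :=
      ⟨by rw [(by ring : h - 1 - 1 = h - 2)]; exact hh2, hh1,
        by rw [(by ring : h - 1 + 1 = h)]; exact hh⟩
    have e1 : h - 1 + 1 = h := by ring
    have hne1 : h - 1 ≠ h := fun hc => one_ne_zero_zmod hN (by linear_combination -hc)
    set η' := swapConf η (h - 1) h with hη'
    have hstep : MoveRel η η' := by
      have hs := step_exists hmv
      rw [e1] at hs
      exact hs
    have hE' : isErgodic η' := by
      have hs := isErgodic_swapConf hN hE (Or.inl rfl) hmv
      rw [e1] at hs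
      exact hs
    have hcnt' : numParticles η' = K := by rw [hη', numParticles_swapConf]; exact hcnt
    have v1 : η' (h - 1) = false := by rw [hη', swapConf_fst]; exact hh
    have v2 : η' h = true := by rw [hη', swapConf_snd _ (Ne.symm hne1)]; exact hh1
    have v3 : ∀ w, w ≠ h - 1 → w ≠ h → η' w = η w := by
      intro w hw1 hw2
      rw [hη', swapConf_other _ hw1 hw2]
    have hsets : (Finset.univ.filter fun x : ZMod N => η' x = false) =
        insert (h - 1) ((Finset.univ.filter fun x : ZMod N => η x = false).erase h) := by
      ext y
      simp only [Finset.mem_filter, Finset.mem_univ, true_and, Finset.mem_insert,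
        Finset.mem_erase]
      constructor
      · intro hy
        by_cases hy1 : y = h - 1
        · exact Or.inl hy1
        · by_cases hy2 : y = h
          · exfalso
            rw [hy2, v2] at hy
            exact absurd hy (by decide)
          · exact Or.inr ⟨hy2, by rw [← v3 y hy1 hy2]; exact hy⟩
      · intro hy
        rcases hy with rfl | ⟨hy2, hy3⟩
        · exact v1
        · rw [v3 y (fun hc => by rw [hc, hh1] at hy3; exact absurd hy3 (by decide)) hy2]
          exact hy3
    have hmemh : h ∈ Finset.univ.filter (fun x : ZMod N => η x = false) := by
      simp only [Finset.mem_filter, Finset.mem_univ, true_and]; exact hh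
    have hnotmem : h - 1 ∉ (Finset.univ.filter fun x : ZMod N => η x = false).erase h := by
      intro hc
      have := (Finset.mem_erase.mp hc).2
      simp only [Finset.mem_filter, Finset.mem_univ, true_and] at this
      rw [hh1] at this
      exact absurd this (by decide)
    have hsum : Phi η' = (h - 1).val +
        ∑ x ∈ (Finset.univ.filter fun x : ZMod N => η x = false).erase h, x.val := by
      rw [Phi, hsets, Finset.sum_insert hnotmem]
    have hsum2 : (∑ x ∈ (Finset.univ.filter fun x : ZMod N => η x = false).erase h, x.val)
        + h.val = Phi η := Finset.sum_erase_add _ _ hmemh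
    have hvlt : (h - 1).val < h.val := val_sub_one_lt hne0
    have hPhi : Phi η' < Phi η := by omega
    exact Relation.ReflTransGen.head hstep
      (IHn (Phi η') (by omega) η' le_rfl hcnt' hE')

lemma isErgodic_of_reach (hN : 3 ≤ N) {η ξ : Conf N}
    (hr : Relation.ReflTransGen MoveRel η ξ) (hE : isErgodic η) : isErgodic ξ := by
  induction hr with
  | refl => exact hE
  | tail hab hbc IH => exact isErgodic_of_moveRel hN IH hbc

lemma numParticles_of_reach {η ξ : Conf N} (hr : Relation.ReflTransGen MoveRel η ξ) :
    numParticles ξ = numParticles η := by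
  induction hr with
  | refl => rfl
  | tail hab hbc IH => rw [numParticles_of_moveRel hbc, IH]

lemma reach_rev (hN : 3 ≤ N) {η ξ : Conf N} (hr : Relation.ReflTransGen MoveRel η ξ)
    (hE : isErgodic η) : Relation.ReflTransGen MoveRel ξ η := by
  induction hr with
  | refl => exact Relation.ReflTransGen.refl
  | @tail b c hab hbc IH =>
    have hEb : isErgodic b := isErgodic_of_reach hN hab hE
    have hEc : isErgodic c := isErgodic_of_moveRel hN hEb hbc
    have hstep : MoveRel c b := by
      rw [MoveRel, jumpCount_comm hN hEc hEb]
      exact hbc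
    exact Relation.ReflTransGen.head hstep IH

/-- Every configuration reaches every ergodic configuration. -/
lemma reach_all (hN : 3 ≤ N) (hK1 : N < 2 * K) (hK2 : K ≤ N) {η ξ : Conf N}
    (hη : numParticles η = K) (hξ : numParticles ξ = K) (hEξ : isErgodic ξ) :
    Relation.ReflTransGen MoveRel η ξ := by
  obtain ⟨μ, hr1, hEμ, hcμ⟩ := absorb hN (holePairs η).card η le_rfl (by rw [hη]; exact hK1)
  have h2 := reach_star hN hK1 hK2 (Phi μ) μ le_rfl (by rw [hcμ, hη]) hEμ
  have h3 := reach_star hN hK1 hK2 (Phi ξ) ξ le_rfl hξ hEξ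
  exact (hr1.trans h2).trans (reach_rev hN h3 hEξ)

end FEP
namespace FEP

section MatrixLemmas

open NormedSpace

variable {ι : Type*} [Fintype ι] [DecidableEq ι]

lemma hasSum_exp_entry (A : Matrix ι ι ℝ) (i j : ι) :
    HasSum (fun n : ℕ => (n.factorial : ℝ)⁻¹ * (A ^ n) i j) (exp A i j) := by
  letI : SeminormedRing (Matrix ι ι ℝ) := Matrix.linftyOpSemiNormedRing
  letI : NormedRing (Matrix ι ι ℝ) := Matrix.linftyOpNormedRing
  letI : NormedAlgebra ℝ (Matrix ι ι ℝ) := Matrix.linftyOpNormedAlgebra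
  have h := exp_series_hasSum_exp' (𝕂 := ℝ) A
  have hcont : Continuous (fun M : Matrix ι ι ℝ => M i j) :=
    Continuous.comp (continuous_apply j) (continuous_apply (A := fun _ : ι => ι → ℝ) i)
  have h2 := h.map (AddMonoidHom.mk' (fun M : Matrix ι ι ℝ => M i j) (fun _ _ => rfl)) hcont
  exact h2

lemma pow_entry_nonneg {A : Matrix ι ι ℝ} (hA : ∀ i j, 0 ≤ A i j) :
    ∀ n : ℕ, ∀ i j, 0 ≤ (A ^ n) i j := by
  intro n
  induction n with
  | zero =>
    intro i j
    by_cases h : i = j <;> simp [Matrix.one_apply, h]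
  | succ n IH =>
    intro i j
    rw [pow_succ, Matrix.mul_apply]
    exact Finset.sum_nonneg fun k _ => mul_nonneg (IH i k) (hA k j)

lemma exp_entry_nonneg_of_nonneg {A : Matrix ι ι ℝ} (hA : ∀ i j, 0 ≤ A i j) (i j : ι) :
    0 ≤ exp A i j :=
  (hasSum_exp_entry A i j).nonneg fun n =>
    mul_nonneg (by positivity) (pow_entry_nonneg hA n i j)

lemma exp_entry_le_of_nonneg {A : Matrix ι ι ℝ} (hA : ∀ i j, 0 ≤ A i j) (n : ℕ) (i j : ι) :
    (n.factorial : ℝ)⁻¹ * (A ^ n) i j ≤ exp A i j :=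
  le_hasSum (hasSum_exp_entry A i j) n fun m _ =>
    mul_nonneg (by positivity) (pow_entry_nonneg hA m i j)

lemma exp_eq_smul_shift (A : Matrix ι ι ℝ) (c : ℝ) :
    exp A = Real.exp (-c) • exp (A + c • (1 : Matrix ι ι ℝ)) := by
  letI : SeminormedRing (Matrix ι ι ℝ) := Matrix.linftyOpSemiNormedRing
  letI : NormedRing (Matrix ι ι ℝ) := Matrix.linftyOpNormedRing
  letI : NormedAlgebra ℝ (Matrix ι ι ℝ) := Matrix.linftyOpNormedAlgebra
  have h1 : A = (-c) • (1 : Matrix ι ι ℝ) + (A + c • 1) := by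
    rw [neg_smul]; abel
  have hcomm : Commute ((-c) • (1 : Matrix ι ι ℝ)) (A + c • 1) :=
    ((Commute.one_left (A + c • 1)).smul_left (-c))
  have hcont : Continuous (algebraMap ℝ (Matrix ι ι ℝ)) := by
    have h4 : ⇑(algebraMap ℝ (Matrix ι ι ℝ)) = fun c : ℝ => c • (1 : Matrix ι ι ℝ) := by
      funext c; exact Algebra.algebraMap_eq_smul_one c
    rw [h4]
    exact continuous_id.smul continuous_const
  have h2 : exp ((-c) • (1 : Matrix ι ι ℝ)) = Real.exp (-c) • (1 : Matrix ι ι ℝ) := by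
    calc exp ((-c) • (1 : Matrix ι ι ℝ))
        = exp (algebraMap ℝ (Matrix ι ι ℝ) (-c)) := by
          rw [Algebra.algebraMap_eq_smul_one]
      _ = algebraMap ℝ (Matrix ι ι ℝ) (exp (-c)) := (map_exp _ hcont _).symm
      _ = Real.exp (-c) • (1 : Matrix ι ι ℝ) := by
          rw [← Real.exp_eq_exp_ℝ, Algebra.algebraMap_eq_smul_one]
  calc exp A = exp ((-c) • (1 : Matrix ι ι ℝ) + (A + c • 1)) := by rw [← h1]
    _ = exp ((-c) • (1 : Matrix ι ι ℝ)) * exp (A + c • 1) :=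
        Matrix.exp_add_of_commute _ _ hcomm
    _ = Real.exp (-c) • exp (A + c • (1 : Matrix ι ι ℝ)) := by
        rw [h2, Matrix.smul_mul, Matrix.one_mul]

lemma exp_entry_nonneg {A : Matrix ι ι ℝ} (hoff : ∀ i j, i ≠ j → 0 ≤ A i j) (i j : ι) :
    0 ≤ exp A i j := by
  set c : ℝ := ∑ k, |A k k| with hc
  have hB : ∀ a b, 0 ≤ (A + c • (1 : Matrix ι ι ℝ)) a b := by
    intro a b
    by_cases hab : a = b
    · subst hab
      have h1 : |A a a| ≤ c := Finset.single_le_sum (fun k _ => abs_nonneg (A k k))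
        (Finset.mem_univ a)
      have h2 : -A a a ≤ |A a a| := neg_le_abs _
      simp only [Matrix.add_apply, Matrix.smul_apply, Matrix.one_apply_eq, smul_eq_mul, mul_one]
      linarith
    · simp only [Matrix.add_apply, Matrix.smul_apply, Matrix.one_apply_ne hab, smul_eq_mul,
        mul_zero, add_zero]
      exact hoff a b hab
  rw [exp_eq_smul_shift A c, Matrix.smul_apply, smul_eq_mul]
  exact mul_nonneg (Real.exp_nonneg _) (exp_entry_nonneg_of_nonneg hB i j)

lemma exp_row_sum {A : Matrix ι ι ℝ} (hrow : ∀ i, ∑ j, A i j = 0) (i : ι) :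
    ∑ j, exp A i j = 1 := by
  have hpow : ∀ n : ℕ, ∀ i, ∑ j, (A ^ (n + 1)) i j = 0 := by
    intro n i
    rw [pow_succ]
    simp only [Matrix.mul_apply]
    rw [Finset.sum_comm]
    have : ∀ k, ∑ j, (A ^ n) i k * A k j = 0 := by
      intro k
      rw [← Finset.mul_sum, hrow k, mul_zero]
    simp [this]
  have hsum : HasSum (fun n : ℕ => ∑ j, (n.factorial : ℝ)⁻¹ * (A ^ n) i j)
      (∑ j, exp A i j) := hasSum_sum fun j _ => hasSum_exp_entry A i j
  have hfun : (fun n : ℕ => ∑ j, (n.factorial : ℝ)⁻¹ * (A ^ n) i j) =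
      fun n : ℕ => if n = 0 then (1 : ℝ) else 0 := by
    funext n
    cases n with
    | zero =>
      simp [Matrix.one_apply, Finset.sum_ite_eq]
    | succ n =>
      rw [← Finset.mul_sum, hpow n i, mul_zero]
      simp
  rw [hfun] at hsum
  exact hsum.unique (hasSum_ite_eq 0 1)

lemma exp_vecMul_stationary {A : Matrix ι ι ℝ} {p : ι → ℝ}
    (hp : ∀ j, ∑ i, p i * A i j = 0) (j : ι) :
    ∑ i, p i * exp A i j = p j := by
  have hpow : ∀ n : ℕ, ∀ j, ∑ i, p i * (A ^ (n + 1)) i j = 0 := by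
    intro n j
    rw [pow_succ']
    simp only [Matrix.mul_apply]
    calc ∑ i, p i * ∑ k, A i k * (A ^ n) k j
        = ∑ i, ∑ k, p i * A i k * (A ^ n) k j := by
          refine Finset.sum_congr rfl fun i _ => ?_
          rw [Finset.mul_sum]
          exact Finset.sum_congr rfl fun k _ => by ring
      _ = ∑ k, ∑ i, p i * A i k * (A ^ n) k j := Finset.sum_comm
      _ = ∑ k, (∑ i, p i * A i k) * (A ^ n) k j := by
          refine Finset.sum_congr rfl fun k _ => ?_
          rw [Finset.sum_mul]
      _ = 0 := by simp [hp]
  have hsum : HasSum (fun n : ℕ => ∑ i, p i * ((n.factorial : ℝ)⁻¹ * (A ^ n) i j))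
      (∑ i, p i * exp A i j) :=
    hasSum_sum fun i _ => (hasSum_exp_entry A i j).mul_left (p i)
  have hfun : (fun n : ℕ => ∑ i, p i * ((n.factorial : ℝ)⁻¹ * (A ^ n) i j)) =
      fun n : ℕ => if n = 0 then p j else 0 := by
    funext n
    cases n with
    | zero =>
      simp only [pow_zero, Nat.factorial_zero, Nat.cast_one, inv_one, one_mul, if_pos]
      have he : ∀ i : ι, p i * (1 : Matrix ι ι ℝ) i j = p i * if i = j then 1 else 0 := by
        intro i; rw [Matrix.one_apply]
      rw [Finset.sum_congr rfl fun i _ => he i]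
      simp only [mul_ite, mul_one, mul_zero, Finset.sum_ite_eq', Finset.mem_univ, if_true]
    | succ n =>
      have he : ∑ i, p i * ((((n+1).factorial : ℝ))⁻¹ * (A ^ (n+1)) i j) =
          (((n+1).factorial : ℝ))⁻¹ * ∑ i, p i * (A ^ (n+1)) i j := by
        rw [Finset.mul_sum]
        exact Finset.sum_congr rfl fun i _ => by ring
      rw [he, hpow n j, mul_zero]
      simp
  rw [hfun] at hsum
  exact hsum.unique (hasSum_ite_eq 0 (p j))

end MatrixLemmas

end FEP
namespace FEP

section TV

variable {ι : Type*} [Fintype ι]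

lemma dTV_nonneg (p q : ι → ℝ) : 0 ≤ dTV p q := by
  unfold dTV
  apply div_nonneg _ (by norm_num)
  exact Finset.sum_nonneg fun s _ => abs_nonneg _

lemma dTV_le_one {p q : ι → ℝ} (hp : ∀ s, 0 ≤ p s) (hq : ∀ s, 0 ≤ q s)
    (hps : ∑ s, p s = 1) (hqs : ∑ s, q s = 1) : dTV p q ≤ 1 := by
  unfold dTV
  rw [div_le_one (by norm_num)]
  calc ∑ s, |p s - q s| ≤ ∑ s, (p s + q s) := by
        apply Finset.sum_le_sum
        intro s _
        have h := abs_add_le (p s) (-(q s))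
        rw [← sub_eq_add_neg, abs_neg] at h
        exact h.trans (by rw [abs_of_nonneg (hp s), abs_of_nonneg (hq s)])
    _ = 2 := by rw [Finset.sum_add_distrib, hps, hqs]; norm_num

lemma sum_sub_le_dTV {p q : ι → ℝ} (hsum : ∑ s, p s = ∑ s, q s) (T : Finset ι) :
    ∑ s ∈ T, (p s - q s) ≤ dTV p q := by
  have h0 : ∑ s ∈ T, (p s - q s) + ∑ s ∈ Tᶜ, (p s - q s) = 0 := by
    rw [Finset.sum_add_sum_compl, Finset.sum_sub_distrib, hsum, sub_self]
  have h1 : ∑ s ∈ T, (p s - q s) ≤ ∑ s ∈ T, |p s - q s| :=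
    Finset.sum_le_sum fun s _ => le_abs_self _
  have h2 : -∑ s ∈ Tᶜ, (p s - q s) ≤ ∑ s ∈ Tᶜ, |p s - q s| := by
    rw [← Finset.sum_neg_distrib]
    exact Finset.sum_le_sum fun s _ => neg_le_abs _
  have h3 : ∑ s ∈ T, |p s - q s| + ∑ s ∈ Tᶜ, |p s - q s| = ∑ s, |p s - q s| :=
    Finset.sum_add_sum_compl T _
  unfold dTV
  linarith

lemma dTV_mix_le {p : ι → ℝ} (hp : ∀ i, 0 ≤ p i) (hps : ∑ i, p i = 1)
    (M : Matrix ι ι ℝ) (π : ι → ℝ) :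
    dTV (fun j => ∑ i, p i * M i j) π ≤ ∑ i, p i * dTV (fun j => M i j) π := by
  unfold dTV
  have key : ∀ j, |∑ i, p i * M i j - π j| ≤ ∑ i, p i * |M i j - π j| := by
    intro j
    have he : ∑ i, p i * M i j - π j = ∑ i, p i * (M i j - π j) := by
      have h1 : ∑ i, p i * (M i j - π j) = ∑ i, p i * M i j - ∑ i, p i * π j := by
        rw [← Finset.sum_sub_distrib]
        exact Finset.sum_congr rfl fun i _ => by ring
      rw [h1, ← Finset.sum_mul, hps, one_mul]
    rw [he]
    refine (Finset.abs_sum_le_sum_abs _ _).trans ?_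
    apply Finset.sum_le_sum
    intro i _
    rw [abs_mul, abs_of_nonneg (hp i)]
  calc (∑ j, |∑ i, p i * M i j - π j|) / 2
      ≤ (∑ j, ∑ i, p i * |M i j - π j|) / 2 := by
        gcongr with j _
        exact key j
    _ = ∑ i, p i * ((∑ j, |M i j - π j|) / 2) := by
        rw [Finset.sum_comm, Finset.sum_div]
        refine Finset.sum_congr rfl fun i _ => ?_
        rw [← Finset.mul_sum, mul_div_assoc]

lemma dTV_contract {P : Matrix ι ι ℝ} {pi : ι → ℝ} {δ : ℝ} (hδ0 : 0 ≤ δ)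
    (hmin : ∀ i j, δ * pi j ≤ P i j) (hrow : ∀ i, ∑ j, P i j = 1) (hpi : ∑ j, pi j = 1)
    {p q : ι → ℝ} (hpq : ∑ i, p i = ∑ i, q i) :
    dTV (fun j => ∑ i, p i * P i j) (fun j => ∑ i, q i * P i j) ≤ (1 - δ) * dTV p q := by
  unfold dTV
  have key : ∀ j, |∑ i, p i * P i j - ∑ i, q i * P i j| ≤
      ∑ i, |p i - q i| * (P i j - δ * pi j) := by
    intro j
    have h0 : ∑ i, (p i - q i) * (δ * pi j) = 0 := by
      rw [← Finset.sum_mul, Finset.sum_sub_distrib, hpq, sub_self, zero_mul]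
    have he : ∑ i, p i * P i j - ∑ i, q i * P i j =
        ∑ i, (p i - q i) * (P i j - δ * pi j) := by
      have h1 : ∑ i, (p i - q i) * (P i j - δ * pi j) =
          ∑ i, ((p i * P i j - q i * P i j) - (p i - q i) * (δ * pi j)) :=
        Finset.sum_congr rfl fun i _ => by ring
      rw [h1, Finset.sum_sub_distrib, h0, sub_zero, Finset.sum_sub_distrib]
    rw [he]
    refine (Finset.abs_sum_le_sum_abs _ _).trans ?_
    apply Finset.sum_le_sum
    intro i _
    rw [abs_mul, abs_of_nonneg (by linarith [hmin i j] : (0:ℝ) ≤ P i j - δ * pi j)]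
  calc (∑ j, |∑ i, p i * P i j - ∑ i, q i * P i j|) / 2
      ≤ (∑ j, ∑ i, |p i - q i| * (P i j - δ * pi j)) / 2 := by
        gcongr with j _
        exact key j
    _ = (∑ i, |p i - q i| * (1 - δ)) / 2 := by
        rw [Finset.sum_comm]
        congr 1
        refine Finset.sum_congr rfl fun i _ => ?_
        rw [← Finset.mul_sum]
        congr 1
        rw [Finset.sum_sub_distrib, hrow, ← Finset.mul_sum, hpi, mul_one]
    _ = (1 - δ) * ((∑ i, |p i - q i|) / 2) := by
        rw [← Finset.sum_mul]
        ring

end TV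

end FEP
namespace FEP

section Gen

variable {N K : ℕ} [NeZero N]

lemma genFEP_diag (η : GammaT N K) : genFEP N K η η =
    -(∑ η'' ∈ Finset.univ.filter (fun η'' => η'' ≠ η), (jumpCount η.1 η''.1 : ℝ)) := by
  unfold genFEP; rw [if_pos rfl]

lemma genFEP_offdiag {η η' : GammaT N K} (h : η' ≠ η) :
    genFEP N K η η' = (jumpCount η.1 η'.1 : ℝ) := by
  unfold genFEP; rw [if_neg h]

lemma genFEP_row_sum (η : GammaT N K) : ∑ η', genFEP N K η η' = 0 := by
  rw [Fintype.sum_eq_add_sum_compl η]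
  have h1 : ∑ η' ∈ {η}ᶜ, genFEP N K η η' =
      ∑ η' ∈ ({η}ᶜ : Finset (GammaT N K)), (jumpCount η.1 η'.1 : ℝ) := by
    refine Finset.sum_congr rfl fun η' hη' => ?_
    exact genFEP_offdiag (by simpa using hη')
  have h2 : ({η}ᶜ : Finset (GammaT N K)) = Finset.univ.filter (fun η'' => η'' ≠ η) := by
    ext y; simp
  rw [genFEP_diag, h1, h2]
  ring

lemma genFEP_offdiag_nonneg {η η' : GammaT N K} (h : η' ≠ η) : 0 ≤ genFEP N K η η' := by
  rw [genFEP_offdiag h]; positivity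

lemma genFEP_ergodic_zero (hN : 3 ≤ N) {η η' : GammaT N K} (hE : isErgodic η.1)
    (hE' : ¬ isErgodic η'.1) : genFEP N K η η' = 0 := by
  have hne : η' ≠ η := fun h => hE' (by rw [h]; exact hE)
  rw [genFEP_offdiag hne, Nat.cast_eq_zero]
  by_contra h
  exact hE' (isErgodic_of_moveRel hN hE h)

lemma genFEP_pow_block (hN : 3 ≤ N) : ∀ n : ℕ, ∀ η η' : GammaT N K, isErgodic η.1 →
    ¬ isErgodic η'.1 → ((genFEP N K) ^ n) η η' = 0 := by
  intro n
  induction n with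
  | zero =>
    intro η η' hE hE'
    have hne : η ≠ η' := fun h => hE' (h ▸ hE)
    simp [Matrix.one_apply_ne hne]
  | succ n IH =>
    intro η η' hE hE'
    rw [pow_succ', Matrix.mul_apply]
    apply Finset.sum_eq_zero
    intro μ _
    by_cases hμ : isErgodic μ.1
    · rw [IH μ η' hμ hE', mul_zero]
    · rw [genFEP_ergodic_zero hN hE hμ, zero_mul]

lemma Pt_nonneg {t : ℝ} (ht : 0 ≤ t) (η η' : GammaT N K) : 0 ≤ Pt N K t η η' := by
  unfold Pt
  apply exp_entry_nonneg
  intro a b hab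
  rw [Matrix.smul_apply, smul_eq_mul]
  exact mul_nonneg ht (genFEP_offdiag_nonneg (Ne.symm hab))

lemma Pt_row_sum (t : ℝ) (η : GammaT N K) : ∑ η', Pt N K t η η' = 1 := by
  unfold Pt
  apply exp_row_sum
  intro i
  have h : ∑ j, (t • genFEP N K) i j = t * ∑ j, genFEP N K i j := by
    rw [Finset.mul_sum]
    exact Finset.sum_congr rfl fun j _ => by rw [Matrix.smul_apply, smul_eq_mul]
  rw [h, genFEP_row_sum, mul_zero]

lemma Pt_block (hN : 3 ≤ N) (t : ℝ) {η η' : GammaT N K} (hE : isErgodic η.1)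
    (hE' : ¬ isErgodic η'.1) : Pt N K t η η' = 0 := by
  unfold Pt
  have h := hasSum_exp_entry (t • genFEP N K) η η'
  have hz : (fun n : ℕ => ((n.factorial : ℝ))⁻¹ * ((t • genFEP N K) ^ n) η η') =
      fun _ => (0:ℝ) := by
    funext n
    rw [smul_pow, Matrix.smul_apply, genFEP_pow_block hN n η η' hE hE', smul_zero, mul_zero]
  rw [hz] at h
  exact (h.unique hasSum_zero)

lemma Pt_chapman (s t : ℝ) (η η' : GammaT N K) :
    Pt N K (s + t) η η' = ∑ μ, Pt N K s η μ * Pt N K t μ η' := by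
  unfold Pt
  have hcomm : Commute (s • genFEP N K) (t • genFEP N K) :=
    ((Commute.refl (genFEP N K)).smul_left s).smul_right t
  rw [add_smul, Matrix.exp_add_of_commute _ _ hcomm, Matrix.mul_apply]

lemma piFEP_vecMul_gen (hN : 3 ≤ N) (ξ : GammaT N K) :
    ∑ η, piFEP N K η * genFEP N K η ξ = 0 := by
  have hvanish : ∀ η ∈ Finset.univ, η ∉ ergoFinset N K → piFEP N K η * genFEP N K η ξ = 0 := by
    intro η _ hη
    have hne : ¬ isErgodic η.1 := by
      simp only [ergoFinset, Finset.mem_filter, Finset.mem_univ, true_and] at hη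
      exact hη
    rw [piFEP, if_neg hne, zero_mul]
  rw [← Finset.sum_subset (Finset.subset_univ (ergoFinset N K)) hvanish]
  have hval : ∀ η ∈ ergoFinset N K, piFEP N K η * genFEP N K η ξ
      = (1 / ((ergoFinset N K).card : ℝ)) * genFEP N K η ξ := by
    intro η hη
    have hE : isErgodic η.1 := by
      simp only [ergoFinset, Finset.mem_filter, Finset.mem_univ, true_and] at hη
      exact hη
    rw [piFEP, if_pos hE]
  rw [Finset.sum_congr rfl hval, ← Finset.mul_sum]
  suffices h : ∑ η ∈ ergoFinset N K, genFEP N K η ξ = 0 by rw [h, mul_zero]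
  by_cases hξ : isErgodic ξ.1
  · have hmem : ξ ∈ ergoFinset N K := by
      simp only [ergoFinset, Finset.mem_filter, Finset.mem_univ, true_and]
      exact hξ
    rw [← Finset.add_sum_erase _ _ hmem]
    have hrest : ∑ η ∈ (ergoFinset N K).erase ξ, genFEP N K η ξ =
        ∑ η ∈ (ergoFinset N K).erase ξ, (jumpCount ξ.1 η.1 : ℝ) := by
      refine Finset.sum_congr rfl fun η hη => ?_
      have hne : η ≠ ξ := (Finset.mem_erase.mp hη).1
      have hE : isErgodic η.1 := by
        have h := (Finset.mem_erase.mp hη).2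
        simp only [ergoFinset, Finset.mem_filter, Finset.mem_univ, true_and] at h
        exact h
      rw [genFEP_offdiag (Ne.symm hne)]
      norm_cast
      exact jumpCount_comm hN hE hξ
    have hdiag : ∑ η'' ∈ Finset.univ.filter (fun η'' => η'' ≠ ξ), (jumpCount ξ.1 η''.1 : ℝ) =
        ∑ η ∈ (ergoFinset N K).erase ξ, (jumpCount ξ.1 η.1 : ℝ) := by
      symm
      apply Finset.sum_subset
      · intro η hη
        simp only [Finset.mem_filter, Finset.mem_univ, true_and]
        exact (Finset.mem_erase.mp hη).1
      · intro η hη hnot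
        simp only [Finset.mem_filter, Finset.mem_univ, true_and] at hη
        have hne : ¬ isErgodic η.1 := by
          intro hc
          exact hnot (Finset.mem_erase.mpr ⟨hη, by
            simp only [ergoFinset, Finset.mem_filter, Finset.mem_univ, true_and]
            exact hc⟩)
        rw [Nat.cast_eq_zero]
        by_contra hjc
        exact hne (isErgodic_of_moveRel hN hξ hjc)
    rw [genFEP_diag, hrest, hdiag]
    ring
  · apply Finset.sum_eq_zero
    intro η hη
    have hE : isErgodic η.1 := by
      simp only [ergoFinset, Finset.mem_filter, Finset.mem_univ, true_and] at hη
      exact hη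
    exact genFEP_ergodic_zero hN hE hξ

lemma Pt_stationary (hN : 3 ≤ N) (t : ℝ) (ξ : GammaT N K) :
    ∑ η, piFEP N K η * Pt N K t η ξ = piFEP N K ξ := by
  unfold Pt
  apply exp_vecMul_stationary
  intro j
  have h : ∑ i, piFEP N K i * (t • genFEP N K) i j =
      t * ∑ i, piFEP N K i * genFEP N K i j := by
    rw [Finset.mul_sum]
    refine Finset.sum_congr rfl fun i _ => ?_
    rw [Matrix.smul_apply, smul_eq_mul]
    ring
  rw [h, piFEP_vecMul_gen hN, mul_zero]

lemma piFEP_nonneg (η : GammaT N K) : 0 ≤ piFEP N K η := by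
  rw [piFEP]
  split_ifs
  · positivity
  · exact le_refl 0

lemma ergoFinset_nonempty (hK1 : N < 2 * K) (hK2 : K ≤ N) : (ergoFinset N K).Nonempty :=
  ⟨⟨starConf N K, numParticles_starConf hK1 hK2⟩, by
    simp only [ergoFinset, Finset.mem_filter, Finset.mem_univ, true_and]
    exact isErgodic_starConf hK1 hK2⟩

lemma piFEP_sum (hK1 : N < 2 * K) (hK2 : K ≤ N) : ∑ η, piFEP N K η = 1 := by
  have hvanish : ∀ η ∈ Finset.univ, η ∉ ergoFinset N K → piFEP N K η = 0 := by
    intro η _ hη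
    have hne : ¬ isErgodic η.1 := by
      simp only [ergoFinset, Finset.mem_filter, Finset.mem_univ, true_and] at hη
      exact hη
    rw [piFEP, if_neg hne]
  rw [← Finset.sum_subset (Finset.subset_univ (ergoFinset N K)) hvanish]
  have hval : ∀ η ∈ ergoFinset N K, piFEP N K η = (1 / ((ergoFinset N K).card : ℝ)) := by
    intro η hη
    have hE : isErgodic η.1 := by
      simp only [ergoFinset, Finset.mem_filter, Finset.mem_univ, true_and] at hη
      exact hη
    rw [piFEP, if_pos hE]
  rw [Finset.sum_congr rfl hval, Finset.sum_const, nsmul_eq_mul]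
  have hpos : 0 < ((ergoFinset N K).card : ℝ) := by
    have := Finset.card_pos.mpr (ergoFinset_nonempty hK1 hK2)
    exact_mod_cast this
  field_simp

end Gen

end FEP
namespace FEP

section Mix

variable {N K : ℕ} [NeZero N]

/-- One step of the FEP on the particle-number submanifold. -/
def MoveG (a b : GammaT N K) : Prop := jumpCount a.1 b.1 ≠ 0

lemma reach_lift {η : GammaT N K} : ∀ {v : Conf N}, Relation.ReflTransGen MoveRel η.1 v →
    ∀ (hv : numParticles v = K),
      Relation.ReflTransGen (MoveG (N := N) (K := K)) η ⟨v, hv⟩ := by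
  intro v hr
  induction hr with
  | refl =>
    intro hv
    have he : (⟨η.1, hv⟩ : GammaT N K) = η := Subtype.ext rfl
    rw [he]
  | @tail b c hab hbc IH =>
    intro hv
    have hb : numParticles b = K := by rw [numParticles_of_reach hab, η.2]
    exact Relation.ReflTransGen.tail (IH hb) hbc

lemma Pt_pos (hN : 3 ≤ N) (hK1 : N < 2 * K) (hK2 : K ≤ N) (η ξ : GammaT N K)
    (hEξ : isErgodic ξ.1) : 0 < Pt N K 1 η ξ := by
  set Q := genFEP N K with hQ
  set c : ℝ := 1 + ∑ μ : GammaT N K, |Q μ μ| with hc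
  set B := Q + c • (1 : Matrix (GammaT N K) (GammaT N K) ℝ) with hB
  have habs : ∀ a : GammaT N K, |Q a a| ≤ ∑ μ : GammaT N K, |Q μ μ| :=
    fun a => Finset.single_le_sum (f := fun μ : GammaT N K => |Q μ μ|)
      (fun μ _ => abs_nonneg _) (Finset.mem_univ a)
  have hBnn : ∀ a b, 0 ≤ B a b := by
    intro a b
    by_cases hab : a = b
    · subst hab
      have h2 : -Q a a ≤ |Q a a| := neg_le_abs _
      simp only [hB, Matrix.add_apply, Matrix.smul_apply, Matrix.one_apply_eq, smul_eq_mul,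
        mul_one]
      have := habs a
      rw [hc]
      linarith
    · simp only [hB, Matrix.add_apply, Matrix.smul_apply, Matrix.one_apply_ne hab, smul_eq_mul,
        mul_zero, add_zero]
      exact genFEP_offdiag_nonneg (Ne.symm hab)
  have hBdiag : ∀ a, 0 < B a a := by
    intro a
    have h2 : -Q a a ≤ |Q a a| := neg_le_abs _
    simp only [hB, Matrix.add_apply, Matrix.smul_apply, Matrix.one_apply_eq, smul_eq_mul,
      mul_one]
    have := habs a
    rw [hc]
    linarith
  have hpos : ∃ n : ℕ, 0 < (B ^ n) η ξ := by
    have hreach := reach_all hN hK1 hK2 η.2 ξ.2 hEξ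
    have hliftG : Relation.ReflTransGen (MoveG (N := N) (K := K)) η ξ :=
      reach_lift hreach ξ.2
    clear hEξ hreach
    induction hliftG with
    | refl =>
      exact ⟨0, by simp [Matrix.one_apply_eq]⟩
    | @tail b d hab hbd IH =>
      obtain ⟨n, hn⟩ := IH
      refine ⟨n + 1, ?_⟩
      rw [pow_succ, Matrix.mul_apply]
      have hterm : 0 < (B ^ n) η b * B b d := by
        apply mul_pos hn
        by_cases hbd' : b = d
        · rw [hbd']; exact hBdiag d
        · have he : B b d = Q b d := by
            simp only [hB, Matrix.add_apply, Matrix.smul_apply, Matrix.one_apply_ne hbd',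
              smul_eq_mul, mul_zero, add_zero]
          rw [he, hQ, genFEP_offdiag (Ne.symm hbd')]
          exact_mod_cast Nat.pos_of_ne_zero hbd
      apply Finset.sum_pos' ?_ ⟨b, Finset.mem_univ b, hterm⟩
      intro μ _
      exact mul_nonneg (pow_entry_nonneg hBnn n η μ) (hBnn μ d)
  obtain ⟨n, hn⟩ := hpos
  have h1 : Pt N K 1 η ξ = Real.exp (-c) * NormedSpace.exp B η ξ := by
    unfold Pt
    rw [one_smul, ← hQ, exp_eq_smul_shift Q c, ← hB, Matrix.smul_apply, smul_eq_mul]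
  rw [h1]
  apply mul_pos (Real.exp_pos _)
  have hlow : (0:ℝ) < (n.factorial : ℝ)⁻¹ * (B ^ n) η ξ := by
    apply mul_pos _ hn
    have : (0:ℝ) < (n.factorial : ℝ) := by exact_mod_cast n.factorial_pos
    positivity
  exact lt_of_lt_of_le hlow (exp_entry_le_of_nonneg hBnn n η ξ)

lemma exists_mixing (hN : 3 ≤ N) (hK1 : N < 2 * K) (hK2 : K ≤ N) {ε : ℝ} (hε : 0 < ε) :
    ∃ t : ℝ, 0 ≤ t ∧ ∀ η : GammaT N K, dTV (Pt N K t η) (piFEP N K) ≤ ε := by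
  obtain ⟨ξ0, hξ0⟩ := ergoFinset_nonempty (N := N) (K := K) hK1 hK2
  have hprod_ne : ((Finset.univ : Finset (GammaT N K)) ×ˢ ergoFinset N K).Nonempty :=
    ⟨(ξ0, ξ0), Finset.mem_product.mpr ⟨Finset.mem_univ _, hξ0⟩⟩
  have hEpos : 0 < ((ergoFinset N K).card : ℝ) := by
    exact_mod_cast Finset.card_pos.mpr (ergoFinset_nonempty (N := N) (K := K) hK1 hK2)
  set m := ((Finset.univ : Finset (GammaT N K)) ×ˢ ergoFinset N K).inf' hprod_ne
    (fun p => Pt N K 1 p.1 p.2) with hm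
  have hmpos : 0 < m := by
    rw [hm, Finset.lt_inf'_iff]
    intro p hp
    have h2 := (Finset.mem_product.mp hp).2
    have hEp : isErgodic p.2.1 := by
      simp only [ergoFinset, Finset.mem_filter, Finset.mem_univ, true_and] at h2
      exact h2
    exact Pt_pos hN hK1 hK2 p.1 p.2 hEp
  set δ : ℝ := min 1 (m * ((ergoFinset N K).card : ℝ)) with hδ
  have hδpos : 0 < δ := lt_min one_pos (mul_pos hmpos hEpos)
  have hδ1 : δ ≤ 1 := min_le_left _ _
  have hminor : ∀ η ξ : GammaT N K, δ * piFEP N K ξ ≤ Pt N K 1 η ξ := by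
    intro η ξ
    by_cases hEξ : isErgodic ξ.1
    · have hmem : (η, ξ) ∈ ((Finset.univ : Finset (GammaT N K)) ×ˢ ergoFinset N K) :=
        Finset.mem_product.mpr ⟨Finset.mem_univ _, by
          simp only [ergoFinset, Finset.mem_filter, Finset.mem_univ, true_and]
          exact hEξ⟩
      have hle : m ≤ Pt N K 1 η ξ := Finset.inf'_le _ hmem
      rw [piFEP, if_pos hEξ]
      calc δ * (1 / ((ergoFinset N K).card : ℝ))
          ≤ (m * ((ergoFinset N K).card : ℝ)) * (1 / ((ergoFinset N K).card : ℝ)) := by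
            apply mul_le_mul_of_nonneg_right (min_le_right _ _)
            positivity
        _ = m := by field_simp
        _ ≤ Pt N K 1 η ξ := hle
    · rw [piFEP, if_neg hEξ, mul_zero]
      exact Pt_nonneg one_pos.le η ξ
  have hiter : ∀ n : ℕ, ∀ η : GammaT N K,
      dTV (Pt N K (n : ℝ) η) (piFEP N K) ≤ (1 - δ) ^ n := by
    intro n
    induction n with
    | zero =>
      intro η
      rw [Nat.cast_zero, pow_zero]
      exact dTV_le_one (fun s => Pt_nonneg le_rfl η s) piFEP_nonneg (Pt_row_sum 0 η)
        (piFEP_sum hK1 hK2)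
    | succ n IH =>
      intro η
      have hcast : ((n + 1 : ℕ) : ℝ) = (n : ℝ) + 1 := by push_cast; ring
      have hch : Pt N K ((n + 1 : ℕ) : ℝ) η =
          fun ξ => ∑ μ, Pt N K (n : ℝ) η μ * Pt N K 1 μ ξ := by
        funext ξ
        rw [hcast, Pt_chapman]
      have hst : piFEP N K = fun ξ => ∑ μ, piFEP N K μ * Pt N K 1 μ ξ := by
        funext ξ
        rw [Pt_stationary hN 1 ξ]
      rw [hch]
      calc dTV (fun ξ => ∑ μ, Pt N K (n : ℝ) η μ * Pt N K 1 μ ξ) (piFEP N K)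
          = dTV (fun ξ => ∑ μ, Pt N K (n : ℝ) η μ * Pt N K 1 μ ξ)
            (fun ξ => ∑ μ, piFEP N K μ * Pt N K 1 μ ξ) := by rw [← hst]
        _ ≤ (1 - δ) * dTV (Pt N K (n : ℝ) η) (piFEP N K) := by
            apply dTV_contract hδpos.le hminor (Pt_row_sum 1) (piFEP_sum hK1 hK2)
            rw [Pt_row_sum, piFEP_sum hK1 hK2]
        _ ≤ (1 - δ) * (1 - δ) ^ n :=
            mul_le_mul_of_nonneg_left (IH η) (by linarith)
        _ = (1 - δ) ^ (n + 1) := by ring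
  obtain ⟨n, hn⟩ := exists_pow_lt_of_lt_one hε (by linarith : 1 - δ < 1)
  exact ⟨(n : ℝ), Nat.cast_nonneg n, fun η => (hiter n η).trans hn.le⟩

end Mix

end FEP
namespace FEP

lemma sInf_add_le_of_mem {A B C : Set ℝ} (hB : B.Nonempty) (hC : C.Nonempty)
    (hBb : ∀ x ∈ B, (0:ℝ) ≤ x) (hCb : ∀ x ∈ C, (0:ℝ) ≤ x) (hAb : BddBelow A)
    (h : ∀ b ∈ B, ∀ c ∈ C, b + c ∈ A) : sInf A ≤ sInf B + sInf C := by
  have hBbdd : BddBelow B := ⟨0, fun x hx => hBb x hx⟩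
  have hCbdd : BddBelow C := ⟨0, fun x hx => hCb x hx⟩
  refine le_of_forall_pos_le_add fun δ hδ => ?_
  obtain ⟨b, hbB, hb⟩ := Real.lt_sInf_add_pos hB (half_pos hδ)
  obtain ⟨c, hcC, hc⟩ := Real.lt_sInf_add_pos hC (half_pos hδ)
  have hle := csInf_le hAb (h b hbB c hcC)
  linarith

end FEP

/-- **Decomposition of the mixing time.**  For every `ε ∈ (0,1)`, every `N ≥ 2` and every
integer `K` with `N/2 < K < N`:
`max(θ_{N,K}(ε), τ^ℰ_{N,K}(ε)) ≤ τ_{N,K}(ε) ≤ θ_{N,K}(ε/2) + τ^ℰ_{N,K}(ε/2)`. -/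
theorem fep_mixing_sandwich
    (ε : ℝ) (hε : ε ∈ Set.Ioo (0 : ℝ) 1) (N K : ℕ) (hN : 2 ≤ N)
    (h1 : N < 2 * K) (h2 : K < N) :
    max (transienceTime N K ε) (ergoMixingTime N K ε) ≤ mixingTime N K ε ∧
      mixingTime N K ε ≤ transienceTime N K (ε / 2) + ergoMixingTime N K (ε / 2) := by
  obtain ⟨hε0, hε1⟩ := hε
  have hN0 : N ≠ 0 := by omega
  haveI : NeZero N := ⟨hN0⟩
  have hN3 : 3 ≤ N := by omega
  have hK2' : K ≤ N := h2.le
  open FEP in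
  -- the three families of sets
  have hAset : ∀ δ : ℝ, 0 < δ →
      ({t : ℝ | 0 ≤ t ∧ ∀ η : GammaT N K, dTV (Pt N K t η) (piFEP N K) ≤ δ}).Nonempty := by
    intro δ hδ
    obtain ⟨t, ht0, ht⟩ := FEP.exists_mixing hN3 h1 hK2' hδ
    exact ⟨t, ht0, ht⟩
  -- mixing implies the transient-mass bound with the same δ
  have hAB : ∀ δ : ℝ, ∀ t : ℝ,
      (0 ≤ t ∧ ∀ η : GammaT N K, dTV (Pt N K t η) (piFEP N K) ≤ δ) →
      (0 ≤ t ∧ ∀ η : GammaT N K,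
        ∑ η' ∈ Finset.univ.filter (fun η' : GammaT N K => ¬ isErgodic η'.1),
          Pt N K t η η' ≤ δ) := by
    intro δ t ht
    obtain ⟨ht0, hmix⟩ := ht
    refine ⟨ht0, fun η => ?_⟩
    have hmass : ∑ η' ∈ Finset.univ.filter (fun η' : GammaT N K => ¬ isErgodic η'.1),
        Pt N K t η η' =
        ∑ η' ∈ Finset.univ.filter (fun η' : GammaT N K => ¬ isErgodic η'.1),
          (Pt N K t η η' - piFEP N K η') := by
      refine Finset.sum_congr rfl fun ξ hξ => ?_
      have hne : ¬ isErgodic ξ.1 := (Finset.mem_filter.mp hξ).2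
      rw [piFEP, if_neg hne, sub_zero]
    rw [hmass]
    refine (FEP.sum_sub_le_dTV ?_ _).trans (hmix η)
    rw [Pt_row_sum, FEP.piFEP_sum h1 hK2']
  -- combination lemma
  have hcomb : ∀ t1 : ℝ,
      (0 ≤ t1 ∧ ∀ η : GammaT N K,
        ∑ η' ∈ Finset.univ.filter (fun η' : GammaT N K => ¬ isErgodic η'.1),
          Pt N K t1 η η' ≤ ε / 2) →
      ∀ t2 : ℝ,
      (0 ≤ t2 ∧ ∀ η : GammaT N K, isErgodic η.1 → dTV (Pt N K t2 η) (piFEP N K) ≤ ε / 2) →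
      (0 ≤ t1 + t2 ∧ ∀ η : GammaT N K, dTV (Pt N K (t1 + t2) η) (piFEP N K) ≤ ε) := by
    rintro t1 ⟨ht1, htr⟩ t2 ⟨ht2, herg⟩
    refine ⟨by linarith, fun η => ?_⟩
    have hch : Pt N K (t1 + t2) η = fun ξ => ∑ μ, Pt N K t1 η μ * Pt N K t2 μ ξ := by
      funext ξ
      rw [FEP.Pt_chapman]
    rw [hch]
    have hmain := FEP.dTV_mix_le (p := Pt N K t1 η)
      (fun μ => FEP.Pt_nonneg ht1 η μ) (FEP.Pt_row_sum t1 η)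
      (fun μ ξ => Pt N K t2 μ ξ) (piFEP N K)
    refine hmain.trans ?_
    rw [← Finset.sum_filter_add_sum_filter_not Finset.univ
      (fun μ : GammaT N K => ¬ isErgodic μ.1)]
    have hb1 : ∑ μ ∈ Finset.univ.filter (fun μ : GammaT N K => ¬ isErgodic μ.1),
        Pt N K t1 η μ * dTV (fun ξ => Pt N K t2 μ ξ) (piFEP N K) ≤ ε / 2 := by
      calc ∑ μ ∈ Finset.univ.filter (fun μ : GammaT N K => ¬ isErgodic μ.1),
          Pt N K t1 η μ * dTV (fun ξ => Pt N K t2 μ ξ) (piFEP N K)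
          ≤ ∑ μ ∈ Finset.univ.filter (fun μ : GammaT N K => ¬ isErgodic μ.1),
            Pt N K t1 η μ * 1 := by
            apply Finset.sum_le_sum
            intro μ _
            apply mul_le_mul_of_nonneg_left _ (FEP.Pt_nonneg ht1 η μ)
            exact FEP.dTV_le_one (fun s => FEP.Pt_nonneg ht2 μ s) FEP.piFEP_nonneg
              (FEP.Pt_row_sum t2 μ) (FEP.piFEP_sum h1 hK2')
        _ ≤ ε / 2 := by
            simp only [mul_one]
            exact htr η
    have hb2 : ∑ μ ∈ Finset.univ.filter (fun μ : GammaT N K => ¬ ¬ isErgodic μ.1),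
        Pt N K t1 η μ * dTV (fun ξ => Pt N K t2 μ ξ) (piFEP N K) ≤ ε / 2 := by
      calc ∑ μ ∈ Finset.univ.filter (fun μ : GammaT N K => ¬ ¬ isErgodic μ.1),
          Pt N K t1 η μ * dTV (fun ξ => Pt N K t2 μ ξ) (piFEP N K)
          ≤ ∑ μ ∈ Finset.univ.filter (fun μ : GammaT N K => ¬ ¬ isErgodic μ.1),
            Pt N K t1 η μ * (ε / 2) := by
            apply Finset.sum_le_sum
            intro μ hμ
            have hEμ : isErgodic μ.1 := not_not.mp (Finset.mem_filter.mp hμ).2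
            exact mul_le_mul_of_nonneg_left (herg μ hEμ) (FEP.Pt_nonneg ht1 η μ)
        _ = (∑ μ ∈ Finset.univ.filter (fun μ : GammaT N K => ¬ ¬ isErgodic μ.1),
            Pt N K t1 η μ) * (ε / 2) := by rw [Finset.sum_mul]
        _ ≤ 1 * (ε / 2) := by
            apply mul_le_mul_of_nonneg_right _ (by linarith)
            rw [← FEP.Pt_row_sum t1 η]
            apply Finset.sum_le_sum_of_subset_of_nonneg (Finset.subset_univ _)
            intro μ _ _
            exact FEP.Pt_nonneg ht1 η μ
        _ = ε / 2 := one_mul _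
    linarith
  -- now unfold the definitions and conclude
  simp only [mixingTime, ergoMixingTime, transienceTime, dif_neg hN0]
  constructor
  · apply max_le
    · apply csInf_le_csInf ⟨0, fun x hx => hx.1⟩ (hAset ε hε0)
      intro t ht
      exact hAB ε t ht
    · apply csInf_le_csInf ⟨0, fun x hx => hx.1⟩ (hAset ε hε0)
      intro t ht
      exact ⟨ht.1, fun η _ => ht.2 η⟩
  · have hhalf : 0 < ε / 2 := by linarith
    obtain ⟨t₀, ht₀⟩ := hAset (ε / 2) hhalf
    apply FEP.sInf_add_le_of_mem
    · exact ⟨t₀, hAB (ε / 2) t₀ ht₀⟩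
    · exact ⟨t₀, ht₀.1, fun η _ => ht₀.2 η⟩
    · intro x hx; exact hx.1
    · intro x hx; exact hx.1
    · exact ⟨0, fun x hx => hx.1⟩
    · intro b hb c hc
      exact hcomb b hb c hc
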